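/- arXiv:2009.10052 — 4 statements merged into one kernel-verified Lean document; each statement's English description precedes it below -/
import Mathlib

section
/- Assume the Setup (Notation 7.1) with G a finite group, and let p = [G : P] and q = [G : Q]. Then for every subset Z ⊆ E: p·|γ|_{Z,Q} + q·|B|_{Z,Q} ≤ p·|α|_{Z,Q} + q·|β|_{Z,Q}. -/
open Pointwise

open scoped Classical

/-- `sep X Z` is the indicator `|X|*_Z`: it is `1` if `X` separates `Z`
(i.e. `Z` meets both `X` and its complement) and `0` otherwise. -/
noncomputable def sep {E : Type*} (X Z : Set E) : ℕ :=
  if (Z ∩ X).Nonempty ∧ (Z ∩ Xᶜ).Nonempty then 1 else 0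

/-- `|X|_{Z,G'} = Σ_{g ∈ G'} |X|*_{g • Z}` for a subgroup `G'` of a finite group `G`. -/
noncomputable def subNorm {G E : Type*} [Group G] [Fintype G] [MulAction G E]
    (G' : Subgroup G) (X Z : Set E) : ℕ :=
  ∑ g : G', sep X ((g : G) • Z)

lemma sep_le_one {E : Type*} (X Z : Set E) : sep X Z ≤ 1 := by
  unfold sep; split <;> simp

lemma sep_smul {G E : Type*} [Group G] [MulAction G E] (g : G) (X Z : Set E) :
    sep X (g • Z) = sep (g⁻¹ • X) Z := by
  unfold sep
  have h1 : g • Z ∩ X = g • (Z ∩ g⁻¹ • X) := by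
    rw [Set.smul_set_inter, smul_inv_smul]
  have h2 : g • Z ∩ Xᶜ = g • (Z ∩ (g⁻¹ • X)ᶜ) := by
    rw [Set.smul_set_inter, Set.smul_set_compl, smul_inv_smul]
  rw [h1, h2, Set.smul_set_nonempty, Set.smul_set_nonempty]

lemma sep_eq_one {E : Type*} {X Z : Set E} (h1 : (Z ∩ X).Nonempty)
    (h2 : (Z ∩ Xᶜ).Nonempty) : sep X Z = 1 := by
  unfold sep; rw [if_pos ⟨h1, h2⟩]

lemma sep_eq_zero_left {E : Type*} {X Z : Set E} (h : Z ∩ X = ∅) : sep X Z = 0 := by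
  unfold sep
  rw [if_neg]
  rintro ⟨⟨z, hz⟩, -⟩
  simp [h] at hz

lemma sep_eq_zero_sub {E : Type*} {X Z : Set E} (h : Z ⊆ X) : sep X Z = 0 := by
  unfold sep
  rw [if_neg]
  rintro ⟨-, ⟨z, hz1, hz2⟩⟩
  exact hz2 (h hz1)

lemma card_stab_filter {G E : Type*} [Group G] [Fintype G] [MulAction G E]
    (α : Set E) (P Q : Subgroup G) (hP : P = MulAction.stabilizer G α) (hPQ : P ≤ Q)
    (g0 : Q) :
    (Finset.univ.filter fun g : Q => (g : G)⁻¹ • α = (g0 : G)⁻¹ • α).card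
      = Nat.card P := by
  subst hP
  rw [Nat.card_eq_fintype_card, ← Finset.card_univ]
  refine Finset.card_bij'
    (fun g hg => (⟨(g0 : G) * (g : G)⁻¹, by
      simp only [Finset.mem_filter] at hg
      rw [MulAction.mem_stabilizer_iff, mul_smul, hg.2, smul_inv_smul]⟩ :
      MulAction.stabilizer G α))
    (fun p _ => (⟨(p : G)⁻¹ * (g0 : G), mul_mem (inv_mem (hPQ p.2)) g0.2⟩ : Q))
    (fun g hg => Finset.mem_univ _)
    (fun p _ => by
      have hp : (p : G) • α = α := p.2
      simp only [Finset.mem_filter, Finset.mem_univ, true_and]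
      rw [mul_inv_rev, inv_inv, mul_smul, hp])
    (fun g hg => by ext; simp)
    (fun p hp => by ext; simp)


/-- Lemma 7.3: in the Setup (Notation 7.1) with `G` finite, `p = [G : P]`,
`q = [G : Q]`, `γ = α ∩ β` and `B = β ∪ Q • α`, for every `Z ⊆ E`:
`p|γ|_{Z,Q} + q|B|_{Z,Q} ≤ p|α|_{Z,Q} + q|β|_{Z,Q}`. -/
theorem stmt_6 {G E : Type*} [Group G] [Fintype G] [MulAction G E]
    (α β : Set E) (hα : α.Nonempty) (hβ : β.Nonempty)
    (hedgeα : ∀ x : G, (α ∩ x • α).Nonempty → x • α = α)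
    (hedgeβ : ∀ x : G, (β ∩ x • β).Nonempty → x • β = β)
    (P Q : Subgroup G)
    (hP : P = MulAction.stabilizer G α)
    (hQ : Q = MulAction.stabilizer G β)
    (hαβ : (α ∩ β).Nonempty)
    (hPQ : P ≤ Q)
    (hsimple : ∀ g : G, (α ∩ g • β).Nonempty → g ∈ Q)
    (γ A B : Set E)
    (hγ : γ = α ∩ β) (hA : A = α \ γ) (hB : B = β ∪ ⋃ q ∈ Q, q • α)
    (p q : ℕ) (hp : p = P.index) (hq : q = Q.index) :
    ∀ Z : Set E,
      p * subNorm Q γ Z + q * subNorm Q B Z ≤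
        p * subNorm Q α Z + q * subNorm Q β Z := by
  intro Z
  -- basic invariance facts
  have hQβ : ∀ g : G, g ∈ Q → g • β = β := by
    intro g hg; rw [hQ] at hg; exact hg
  have hαtr : ∀ g h : G, ((g • α) ∩ (h • α)).Nonempty → g • α = h • α := by
    intro g h hne
    obtain ⟨z, hz1, hz2⟩ := hne
    have h1 : g⁻¹ • z ∈ α := by
      rwa [← Set.mem_smul_set_iff_inv_smul_mem]
    have h2 : g⁻¹ • z ∈ (g⁻¹ * h) • α := by
      rw [mul_smul]; exact Set.smul_mem_smul_set hz2
    have he := hedgeα _ ⟨g⁻¹ • z, h1, h2⟩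
    have : h • α = g • α := by
      conv_lhs => rw [show h = g * (g⁻¹ * h) by group, mul_smul, he]
    exact this.symm
  have hγg : ∀ g : Q, (g : G)⁻¹ • γ = ((g : G)⁻¹ • α) ∩ β := by
    intro g
    rw [hγ, Set.smul_set_inter, hQβ _ (inv_mem g.2)]
  have hαsubB : ∀ g : Q, (g : G)⁻¹ • α ⊆ B := by
    intro g x hx
    rw [hB]
    exact Or.inr (Set.mem_iUnion₂.mpr ⟨(g : G)⁻¹, inv_mem g.2, hx⟩)
  have hBinv : ∀ g : G, g ∈ Q → g • B = B := by
    intro g hg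
    rw [hB, Set.smul_set_union, hQβ g hg]
    congr 1
    ext x
    simp only [Set.mem_smul_set_iff_inv_smul_mem, Set.mem_iUnion, exists_prop]
    constructor
    · rintro ⟨r, hr, hx⟩
      refine ⟨g * r, mul_mem hg hr, ?_⟩
      rw [mul_inv_rev, mul_smul]
      exact hx
    · rintro ⟨r, hr, hx⟩
      refine ⟨g⁻¹ * r, mul_mem (inv_mem hg) hr, ?_⟩
      rw [mul_inv_rev, inv_inv, mul_smul, smul_inv_smul]
      exact hx
  -- rewrite the subNorms
  have hsub : ∀ X : Set E, subNorm Q X Z = ∑ g : Q, sep ((g : G)⁻¹ • X) Z := by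
    intro X
    exact Finset.sum_congr rfl fun g _ => sep_smul _ _ _
  have hsubβ : subNorm Q β Z = Fintype.card Q * sep β Z := by
    rw [hsub]
    have hc : ∀ g : Q, (g : G)⁻¹ • β = β := fun g => hQβ _ (inv_mem g.2)
    simp only [hc]
    rw [Finset.sum_const, smul_eq_mul, Finset.card_univ]
  have hsubB : subNorm Q B Z = Fintype.card Q * sep B Z := by
    rw [hsub]
    have hc : ∀ g : Q, (g : G)⁻¹ • B = B := fun g => hBinv _ (inv_mem g.2)
    simp only [hc]
    rw [Finset.sum_const, smul_eq_mul, Finset.card_univ]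
  set Sγ := ∑ g : Q, sep ((g : G)⁻¹ • γ) Z with hSγ
  set Sα := ∑ g : Q, sep ((g : G)⁻¹ • α) Z with hSα
  -- the core inequality
  have key : Sγ + Nat.card P * sep B Z ≤ Sα + Nat.card P * sep β Z := by
    by_cases hcase : ∃ g0 : Q, Z ⊆ (g0 : G)⁻¹ • α ∧ (Z ∩ ((g0 : G)⁻¹ • γ)).Nonempty ∧
        (Z ∩ ((g0 : G)⁻¹ • γ)ᶜ).Nonempty
    · obtain ⟨g0, hZsub, hne1, hne2⟩ := hcase
      have hsβ : sep β Z = 1 := by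
        refine sep_eq_one ?_ ?_
        · obtain ⟨z, hz1, hz2⟩ := hne1
          rw [hγg g0] at hz2
          exact ⟨z, hz1, hz2.2⟩
        · obtain ⟨z, hz1, hz2⟩ := hne2
          refine ⟨z, hz1, fun hzβ => hz2 ?_⟩
          rw [hγg g0]
          exact ⟨hZsub hz1, hzβ⟩
      have hsB : sep B Z = 0 := sep_eq_zero_sub (hZsub.trans (hαsubB g0))
      have hbound : ∀ g : Q, sep ((g : G)⁻¹ • γ) Z ≤ sep ((g : G)⁻¹ • α) Z +
          (if (g : G)⁻¹ • α = (g0 : G)⁻¹ • α then 1 else 0) := by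
        intro g
        by_cases he : (g : G)⁻¹ • α = (g0 : G)⁻¹ • α
        · rw [if_pos he]
          exact le_trans (sep_le_one _ _) (by omega)
        · rw [if_neg he]
          have hd : Z ∩ ((g : G)⁻¹ • γ) = ∅ := by
            by_contra hne
            obtain ⟨z, hz1, hz2⟩ := Set.nonempty_iff_ne_empty.mpr hne
            rw [hγg g] at hz2
            exact he (hαtr _ _ ⟨z, hz2.1, hZsub hz1⟩)
          rw [sep_eq_zero_left hd]
          omega
      calc Sγ + Nat.card P * sep B Z = Sγ := by rw [hsB]; ring
        _ ≤ ∑ g : Q, (sep ((g : G)⁻¹ • α) Z +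
            (if (g : G)⁻¹ • α = (g0 : G)⁻¹ • α then 1 else 0)) :=
          Finset.sum_le_sum fun g _ => hbound g
        _ = Sα + Nat.card P := by
          rw [Finset.sum_add_distrib, ← hSα]
          congr 1
          rw [Finset.sum_boole, Nat.cast_id, card_stab_filter α P Q hP hPQ g0]
        _ = Sα + Nat.card P * sep β Z := by rw [hsβ]; ring
    · push_neg at hcase
      have hterm : ∀ g : Q, sep ((g : G)⁻¹ • γ) Z ≤ sep ((g : G)⁻¹ • α) Z := by
        intro g
        by_cases h1 : (Z ∩ ((g : G)⁻¹ • γ)).Nonempty ∧ (Z ∩ ((g : G)⁻¹ • γ)ᶜ).Nonempty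
        · -- show sep α_g = 1
          have hZα : (Z ∩ ((g : G)⁻¹ • α)).Nonempty := by
            obtain ⟨z, hz1, hz2⟩ := h1.1
            rw [hγg g] at hz2
            exact ⟨z, hz1, hz2.1⟩
          have hZαc : (Z ∩ ((g : G)⁻¹ • α)ᶜ).Nonempty := by
            by_contra hc
            have hsubα : Z ⊆ (g : G)⁻¹ • α := by
              intro z hz
              by_contra hzc
              exact hc ⟨z, hz, hzc⟩
            exact (Set.nonempty_iff_ne_empty.mp h1.2) (hcase g hsubα h1.1)
          rw [sep_eq_one hZα hZαc]
          exact sep_le_one _ _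
        · unfold sep
          rw [if_neg h1]
          omega
      by_cases hb : sep B Z ≤ sep β Z
      · have : Sγ ≤ Sα := Finset.sum_le_sum fun g _ => hterm g
        have := Nat.mul_le_mul_left (Nat.card P) hb
        omega
      · have hsB : sep B Z = 1 := by
          have := sep_le_one B Z
          omega
        have hsβ0 : sep β Z = 0 := by
          have := sep_le_one β Z
          omega
        have hBconds : (Z ∩ B).Nonempty ∧ (Z ∩ Bᶜ).Nonempty := by
          by_contra hc
          rw [sep, if_neg hc] at hsB
          omega
        have hZβ : Z ∩ β = ∅ := by
          by_contra hne
          obtain ⟨w, hw1, hw2⟩ := hBconds.2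
          have : (Z ∩ βᶜ).Nonempty := ⟨w, hw1, fun hwβ => hw2 (hB ▸ Or.inl hwβ)⟩
          rw [sep_eq_one (Set.nonempty_iff_ne_empty.mpr hne) this] at hsβ0
          omega
        -- find translate meeting Z
        obtain ⟨z, hz1, hz2⟩ := hBconds.1
        rw [hB] at hz2
        have hz3 : z ∈ ⋃ r ∈ Q, r • α := by
          rcases hz2 with h | h
          · exfalso
            have : z ∈ Z ∩ β := ⟨hz1, h⟩
            rw [hZβ] at this
            exact this
          · exact h
        rw [Set.mem_iUnion₂] at hz3
        obtain ⟨r, hr, hzr⟩ := hz3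
        set g0 : Q := ⟨r⁻¹, inv_mem hr⟩ with hg0
        have hg0α : (g0 : G)⁻¹ • α = r • α := by rw [hg0]; simp
        have hsepα1 : ∀ g : Q, (g : G)⁻¹ • α = (g0 : G)⁻¹ • α →
            sep ((g : G)⁻¹ • α) Z = 1 := by
          intro g hg
          refine sep_eq_one ⟨z, hz1, ?_⟩ ?_
          · rw [hg, hg0α]; exact hzr
          · obtain ⟨w, hw1, hw2⟩ := hBconds.2
            exact ⟨w, hw1, fun hwα => hw2 (hαsubB g hwα)⟩
        have hsepγ0 : ∀ g : Q, sep ((g : G)⁻¹ • γ) Z = 0 := by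
          intro g
          refine sep_eq_zero_left ?_
          rw [hγg g, ← Set.subset_empty_iff]
          intro x hx
          rw [← hZβ]
          exact ⟨hx.1, hx.2.2⟩
        have hSγ0 : Sγ = 0 := Finset.sum_eq_zero fun g _ => hsepγ0 g
        have hSαge : Nat.card P ≤ Sα := by
          rw [← card_stab_filter α P Q hP hPQ g0]
          calc (Finset.univ.filter fun g : Q => (g : G)⁻¹ • α = (g0 : G)⁻¹ • α).card
              = ∑ g ∈ (Finset.univ.filter fun g : Q =>
                (g : G)⁻¹ • α = (g0 : G)⁻¹ • α), sep ((g : G)⁻¹ • α) Z := by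
                rw [Finset.card_eq_sum_ones]
                exact Finset.sum_congr rfl fun g hg =>
                  (hsepα1 g (Finset.mem_filter.mp hg).2).symm
            _ ≤ Sα := Finset.sum_le_sum_of_subset (Finset.subset_univ _)
        rw [hSγ0, hsB, hsβ0]
        omega
  -- put everything together
  have hpq : p * Nat.card P = q * Fintype.card Q := by
    rw [hp, hq, ← Nat.card_eq_fintype_card, Subgroup.index_mul_card, Subgroup.index_mul_card]
  rw [hsub γ, hsub α, hsubβ, hsubB, ← hSγ, ← hSα]
  have h := Nat.mul_le_mul_left p key
  rw [mul_add, mul_add, ← mul_assoc, ← mul_assoc, hpq] at h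
  calc p * Sγ + q * (Fintype.card Q * sep B Z)
      = p * Sγ + q * Fintype.card Q * sep B Z := by ring
    _ ≤ p * Sα + q * Fintype.card Q * sep β Z := h
    _ = p * Sα + q * (Fintype.card Q * sep β Z) := by ring
end

section
/- Assume the Setup (Section 7.2) with G a finite group, let p = [G : P] and q = [G : Q], and suppose Z ⊆ α intersects both A and x • β. Then p·|A|_Z = |G| and q·(|x • β|_Z − |x • B|_Z) ≥ |G|, where |X|_Z = Σ_{g ∈ G} |X|*_{g • Z}. -/
open Pointwise

open scoped Classical

/-- The two displayed consequences of Lemma 7.8: in the Setup (Section 7.2)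
with `G` finite and `Z ⊆ α` meeting both `A` and `x • β`, we have
`p·|A|_Z = |G|` and `q·(|x•β|_Z − |x•B|_Z) ≥ |G|`, where
`|X|_Z = Σ_{g ∈ G} |X|*_{g • Z}`. -/
theorem stmt_10 {G E : Type*} [Group G] [Fintype G] [MulAction G E]
    (α β : Set E)
    (hedgeα : ∀ y : G, (α ∩ y • α).Nonempty → y • α = α)
    (hedgeβ : ∀ y : G, (β ∩ y • β).Nonempty → y • β = β)
    (P Q : Subgroup G)
    (hP : P = MulAction.stabilizer G α)
    (hQ : Q = MulAction.stabilizer G β)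
    (x : G)
    (γ γ' A B : Set E)
    (hγ : γ = ⋃ g ∈ P, g • (α ∩ x • β))
    (hγ' : γ' = ⋃ g ∈ Q, g • (β ∩ x⁻¹ • α))
    (hA : A = α \ γ) (hB : B = β \ γ')
    (p q : ℕ) (hp : p = P.index) (hq : q = Q.index)
    (Z : Set E) (hZ : Z ⊆ α)
    (hZA : (Z ∩ A).Nonempty) (hZβ : (Z ∩ x • β).Nonempty) :
    p * (∑ g : G, sep A (g • Z)) = Fintype.card G ∧
    (q : ℤ) * ((∑ g : G, (sep (x • β) (g • Z) : ℤ)) -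
        (∑ g : G, (sep (x • B) (g • Z) : ℤ))) ≥ (Fintype.card G : ℤ) := by
  subst hp hq
  have hPmem : ∀ g : G, g ∈ P ↔ g • α = α := by
    intro g; rw [hP]; exact Iff.rfl
  have hQmem : ∀ g : G, g ∈ Q ↔ g • β = β := by
    intro g; rw [hQ]; exact Iff.rfl
  have hγmem : ∀ z : E, z ∈ γ ↔ ∃ g ∈ P, z ∈ g • (α ∩ x • β) := by
    intro z; rw [hγ]; simp
  have hγ'mem : ∀ z : E, z ∈ γ' ↔ ∃ g ∈ Q, z ∈ g • (β ∩ x⁻¹ • α) := by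
    intro z; rw [hγ']; simp
  obtain ⟨z1, hz1Z, hz1A⟩ := hZA
  obtain ⟨z0, hz0Z, hz0β⟩ := hZβ
  have hz1α : z1 ∈ α := hZ hz1Z
  have hz0α : z0 ∈ α := hZ hz0Z
  have hz0γ : z0 ∈ γ := (hγmem z0).2
    ⟨1, one_mem P, by rw [one_smul]; exact ⟨hz0α, hz0β⟩⟩
  -- Part 1 key: sep A (g • Z) is the indicator of g ∈ P
  have key1 : ∀ g : G, sep A (g • Z) = if g ∈ P then 1 else 0 := by
    intro g
    split_ifs with hg
    · have hgα : g • α = α := (hPmem g).1 hg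
      have h1 : ((g • Z) ∩ A).Nonempty := by
        refine ⟨g • z1, Set.smul_mem_smul_set hz1Z, ?_⟩
        rw [hA] at hz1A ⊢
        refine ⟨by rw [← hgα]; exact Set.smul_mem_smul_set hz1A.1, ?_⟩
        intro hc
        apply hz1A.2
        obtain ⟨h, hhP, hmem⟩ := (hγmem _).1 hc
        refine (hγmem z1).2 ⟨g⁻¹ * h, mul_mem (inv_mem hg) hhP, ?_⟩
        rw [Set.mem_smul_set_iff_inv_smul_mem] at hmem ⊢
        rw [mul_inv_rev, inv_inv, mul_smul]
        simpa using hmem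
      have h2 : ((g • Z) ∩ Aᶜ).Nonempty := by
        refine ⟨g • z0, Set.smul_mem_smul_set hz0Z, ?_⟩
        intro hc
        rw [hA] at hc
        apply hc.2
        obtain ⟨h, hhP, hmem⟩ := (hγmem z0).1 hz0γ
        refine (hγmem _).2 ⟨g * h, mul_mem hg hhP, ?_⟩
        rw [Set.mem_smul_set_iff_inv_smul_mem] at hmem ⊢
        rw [mul_inv_rev, mul_smul]
        simpa using hmem
      simp [sep, h1, h2]
    · have hemp : ¬ ((g • Z) ∩ A).Nonempty := by
        rintro ⟨w, hw1, hw2⟩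
        apply hg
        rw [hPmem]
        apply hedgeα g
        exact ⟨w, (hA ▸ hw2).1, Set.smul_set_mono hZ hw1⟩
      simp [sep, hemp]
  -- Part 2 key lemmas
  have memR : ∀ g : G, (g • Z) ⊆ x • β → x⁻¹ * g * x ∈ Q := by
    intro g hsub
    rw [hQmem]
    apply hedgeβ
    refine ⟨(x⁻¹ * g) • z0, ?_, ?_⟩
    · have := hsub (Set.smul_mem_smul_set hz0Z)
      rw [mul_smul]
      exact Set.mem_smul_set_iff_inv_smul_mem.1 this
    · rw [Set.mem_smul_set_iff_inv_smul_mem]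
      have heq : (x⁻¹ * g * x)⁻¹ • (x⁻¹ * g) • z0 = x⁻¹ • z0 := by
        rw [smul_smul]; congr 1; group
      rw [heq]
      exact Set.mem_smul_set_iff_inv_smul_mem.1 hz0β
  have hxBempty : ∀ g : G, x⁻¹ * g * x ∈ Q → (g • Z) ∩ (x • B) = ∅ := by
    intro g hgQ
    rw [Set.eq_empty_iff_forall_notMem]
    rintro w ⟨hw1, hw2⟩
    obtain ⟨z, hzZ, rfl⟩ := hw1
    have hB1 : x⁻¹ • (g • z) ∈ B := Set.mem_smul_set_iff_inv_smul_mem.1 hw2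
    rw [hB] at hB1
    apply hB1.2
    refine (hγ'mem _).2 ⟨x⁻¹ * g * x, hgQ, ?_⟩
    rw [Set.mem_smul_set_iff_inv_smul_mem]
    have heq : (x⁻¹ * g * x)⁻¹ • x⁻¹ • g • z = x⁻¹ • z := by
      rw [smul_smul, smul_smul]; congr 1; group
    rw [heq]
    constructor
    · have hb : x⁻¹ • g • z ∈ β := hB1.1
      have h2 := Set.smul_mem_smul_set (a := (x⁻¹ * g * x)⁻¹) hb
      rw [(hQmem _).1 (inv_mem hgQ), heq] at h2
      exact h2
    · exact Set.smul_mem_smul_set (hZ hzZ)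
  have fR : ∀ g : G, x⁻¹ * g * x ∈ Q → sep (x • β) (g • Z) = 1 := by
    intro g hgQ
    have h1 : ((g • Z) ∩ (x • β)).Nonempty := by
      refine ⟨g • z0, Set.smul_mem_smul_set hz0Z, ?_⟩
      rw [Set.mem_smul_set_iff_inv_smul_mem]
      have heq : x⁻¹ • g • z0 = (x⁻¹ * g * x) • (x⁻¹ • z0) := by
        rw [smul_smul, smul_smul]; congr 1; group
      rw [heq, ← (hQmem _).1 hgQ]
      exact Set.smul_mem_smul_set (Set.mem_smul_set_iff_inv_smul_mem.1 hz0β)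
    have h2 : ((g • Z) ∩ (x • β)ᶜ).Nonempty := by
      refine ⟨g • z1, Set.smul_mem_smul_set hz1Z, ?_⟩
      intro hc
      have hb : x⁻¹ • g • z1 ∈ β := Set.mem_smul_set_iff_inv_smul_mem.1 hc
      have hx1 : x⁻¹ • z1 ∈ β := by
        have h3 := Set.smul_mem_smul_set (a := (x⁻¹ * g * x)⁻¹) hb
        rw [(hQmem _).1 (inv_mem hgQ)] at h3
        rwa [show (x⁻¹ * g * x)⁻¹ • x⁻¹ • g • z1 = x⁻¹ • z1 by
          rw [smul_smul, smul_smul]; congr 1; group] at h3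
      have hz1γ : z1 ∈ γ := (hγmem z1).2
        ⟨1, one_mem P, by
          rw [one_smul]
          exact ⟨hz1α, Set.mem_smul_set_iff_inv_smul_mem.2 hx1⟩⟩
      exact (hA ▸ hz1A).2 hz1γ
    simp [sep, h1, h2]
  have key2 : ∀ g : G, (if x⁻¹ * g * x ∈ Q then (1 : ℤ) else 0) ≤
      (sep (x • β) (g • Z) : ℤ) - (sep (x • B) (g • Z) : ℤ) := by
    intro g
    split_ifs with hg
    · rw [fR g hg]
      have h0 : sep (x • B) (g • Z) = 0 := by
        have he := hxBempty g hg
        simp [sep, he]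
      rw [h0]; norm_num
    · have himp : sep (x • B) (g • Z) = 1 → sep (x • β) (g • Z) = 1 := by
        intro h1
        have hcond : ((g • Z) ∩ (x • B)).Nonempty ∧ ((g • Z) ∩ (x • B)ᶜ).Nonempty := by
          by_contra hc; simp [sep, hc] at h1
        have hn1 : ((g • Z) ∩ (x • β)).Nonempty := by
          obtain ⟨w, hw1, hw2⟩ := hcond.1
          exact ⟨w, hw1, Set.smul_set_mono (by rw [hB]; exact Set.diff_subset) hw2⟩
        have hn2 : ((g • Z) ∩ (x • β)ᶜ).Nonempty := by
          by_contra hc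
          have hsub : (g • Z) ⊆ x • β := by
            intro w hw
            by_contra hw2
            exact hc ⟨w, hw, hw2⟩
          exact hg (memR g hsub)
        simp [sep, hn1, hn2]
      have h01 : sep (x • B) (g • Z) = 0 ∨ sep (x • B) (g • Z) = 1 := by
        unfold sep; split_ifs <;> simp
      rcases h01 with h | h
      · rw [h]; simp
      · rw [h, himp h]; norm_num
  constructor
  · have hsum : ∑ g : G, sep A (g • Z) = Fintype.card P := by
      rw [Finset.sum_congr rfl fun g _ => key1 g, Finset.sum_boole]
      rw [← Fintype.card_subtype]
      simp
    rw [hsum]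
    have := P.index_mul_card
    rwa [Nat.card_eq_fintype_card, Nat.card_eq_fintype_card] at this
  · have hcard : (Finset.univ.filter (fun g : G => x⁻¹ * g * x ∈ Q)).card
        = Fintype.card Q := by
      rw [← Fintype.card_subtype]
      refine Fintype.card_congr
        { toFun := fun g => ⟨x⁻¹ * g.1 * x, g.2⟩
          invFun := fun q => ⟨x * q.1 * x⁻¹, by
            have h5 : x⁻¹ * (x * q.1 * x⁻¹) * x = q.1 := by group
            rw [h5]; exact q.2⟩
          left_inv := by rintro ⟨g, hg⟩; ext; show x * (x⁻¹ * g * x) * x⁻¹ = g; group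
          right_inv := by rintro ⟨g, hg⟩; ext; show x⁻¹ * (x * g * x⁻¹) * x = g; group }
    have hsum : (Fintype.card Q : ℤ) ≤
        (∑ g : G, (sep (x • β) (g • Z) : ℤ)) - ∑ g : G, (sep (x • B) (g • Z) : ℤ) := by
      rw [← Finset.sum_sub_distrib]
      calc (Fintype.card Q : ℤ)
          = ∑ g : G, (if x⁻¹ * g * x ∈ Q then (1 : ℤ) else 0) := by
            rw [Finset.sum_boole, hcard]
        _ ≤ _ := Finset.sum_le_sum fun g _ => key2 g
    have hmul := mul_le_mul_of_nonneg_left hsum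
      (by positivity : (0 : ℤ) ≤ (Q.index : ℤ))
    have hci : Q.index * Fintype.card Q = Fintype.card G := by
      have h6 := Q.index_mul_card
      rwa [Nat.card_eq_fintype_card, Nat.card_eq_fintype_card] at h6
    have h7 : (Fintype.card G : ℤ) = (Q.index : ℤ) * (Fintype.card Q : ℤ) := by
      exact_mod_cast hci.symm
    rw [ge_iff_le, h7]
    exact hmul
end

section
/- Assume the Setup (Section 7.2) with G a finite group, and let p = [G : P] and q = [G : Q]. Then for every subset Z ⊆ E: p·|α ∖ γ|_Z + q·|β ∖ γ'|_Z ≤ p·|α|_Z + q·|β|_Z, where |X|_Z = Σ_{g ∈ G} |X|*_{g • Z}. -/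
open Pointwise
open scoped Classical

lemma sep_eq_one_iff {E : Type*} (X Z : Set E) :
    sep X Z = 1 ↔ (Z ∩ X).Nonempty ∧ (Z ∩ Xᶜ).Nonempty := by
  unfold sep; split <;> simp_all

lemma sep_eq_zero_iff {E : Type*} (X Z : Set E) :
    sep X Z = 0 ↔ ¬((Z ∩ X).Nonempty ∧ (Z ∩ Xᶜ).Nonempty) := by
  unfold sep; split <;> simp_all

lemma sep_zero_or_one {E : Type*} (X Z : Set E) : sep X Z = 0 ∨ sep X Z = 1 := by
  unfold sep; split <;> simp

lemma sep_smul_smul {G E : Type*} [Group G] [MulAction G E] (h : G) (X W : Set E) :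
    sep (h • X) (h • W) = sep X W := by
  unfold sep
  rw [show h • W ∩ h • X = h • (W ∩ X) from (Set.smul_set_inter).symm,
      show h • W ∩ (h • X)ᶜ = h • (W ∩ Xᶜ) by rw [Set.smul_set_inter, Set.smul_set_compl],
      Set.smul_set_nonempty, Set.smul_set_nonempty]

lemma sep_smul_invariant {G E : Type*} [Group G] [MulAction G E] {h : G} {X : Set E}
    (hX : h • X = X) (W : Set E) : sep X (h • W) = sep X W := by
  conv_lhs => rw [← hX]
  rw [sep_smul_smul]


lemma card_invariant {G : Type*} [Group G] [Fintype G] (P : Subgroup G) (s : Finset G)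
    (hs : ∀ h ∈ P, ∀ g ∈ s, h * g ∈ s) :
    s.card = (s.image fun g => ((g⁻¹ : G) : G ⧸ P)).card * Nat.card P := by
  rw [Finset.card_eq_sum_card_image (fun g => ((g⁻¹ : G) : G ⧸ P)) s]
  rw [Finset.sum_congr rfl (fun b hb => ?_), Finset.sum_const, smul_eq_mul]
  obtain ⟨g₀, hg₀s, hg₀⟩ := Finset.mem_image.mp hb
  rw [Nat.card_eq_fintype_card]
  have : Fintype.card P = (Finset.univ : Finset P).card := Finset.card_univ.symm
  rw [this]
  symm
  apply Finset.card_bij (fun (h : P) _ => (h : G) * g₀)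
  · intro h _
    rw [Finset.mem_filter]
    refine ⟨hs h h.2 g₀ hg₀s, ?_⟩
    rw [← hg₀, mul_inv_rev, QuotientGroup.eq]
    set_option linter.unnecessarySimpa false in
    simpa using h.2
  · intro h₁ _ h₂ _ hval
    exact Subtype.ext (mul_right_cancel hval)
  · intro g hg
    rw [Finset.mem_filter, ← hg₀, QuotientGroup.eq] at hg
    obtain ⟨hgs, hgP⟩ := hg
    simp only [inv_inv] at hgP
    exact ⟨⟨g * g₀⁻¹, hgP⟩, Finset.mem_univ _, by group⟩

lemma key_count {G : Type*} [Group G] [Fintype G] (P Q : Subgroup G) (s t : Finset G)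
    (hs : ∀ h ∈ P, ∀ g ∈ s, h * g ∈ s)
    (ht : ∀ h ∈ Q, ∀ g ∈ t, h * g ∈ t)
    (f : G → G) (hf : ∀ g ∈ s, f g ∈ t)
    (hinj : ∀ g₁ ∈ s, ∀ g₂ ∈ s, f g₁ * (f g₂)⁻¹ ∈ Q → g₁ * g₂⁻¹ ∈ P) :
    P.index * s.card ≤ Q.index * t.card := by
  rw [card_invariant P s hs, card_invariant Q t ht,
      show P.index * ((s.image fun g => ((g⁻¹ : G) : G ⧸ P)).card * Nat.card P)
        = (s.image fun g => ((g⁻¹ : G) : G ⧸ P)).card * (P.index * Nat.card P) by ring,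
      show Q.index * ((t.image fun g => ((g⁻¹ : G) : G ⧸ Q)).card * Nat.card Q)
        = (t.image fun g => ((g⁻¹ : G) : G ⧸ Q)).card * (Q.index * Nat.card Q) by ring,
      Subgroup.index_mul_card, Subgroup.index_mul_card]
  apply Nat.mul_le_mul_right
  -- key: reps of cosets lie in s
  have hrep : ∀ b ∈ s.image fun g => ((g⁻¹ : G) : G ⧸ P), b.out⁻¹ ∈ s ∧
      ((b.out⁻¹⁻¹ : G) : G ⧸ P) = b := by
    intro b hb
    obtain ⟨g, hgs, hgb⟩ := Finset.mem_image.mp hb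
    have hout : ((b.out : G) : G ⧸ P) = b := QuotientGroup.out_eq' b
    have hmem : b.out⁻¹ * g⁻¹ ∈ P := by
      have heq2 : ((b.out : G) : G ⧸ P) = ((g⁻¹ : G) : G ⧸ P) := by rw [hout, ← hgb]
      exact QuotientGroup.eq.mp heq2
    constructor
    · have : b.out⁻¹ = (b.out⁻¹ * g⁻¹) * g := by group
      rw [this]
      exact hs _ hmem g hgs
    · rw [inv_inv]; exact hout
  apply Finset.card_le_card_of_injOn (fun b => (((f b.out⁻¹)⁻¹ : G) : G ⧸ Q))
  · intro b hb
    exact Finset.mem_image_of_mem _ (hf _ (hrep b hb).1)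
  · intro b₁ hb₁ b₂ hb₂ heq
    have h1 := hrep b₁ (Finset.mem_coe.mp hb₁)
    have h2 := hrep b₂ (Finset.mem_coe.mp hb₂)
    rw [QuotientGroup.eq] at heq
    simp only [inv_inv] at heq
    have hQmem : f b₁.out⁻¹ * (f b₂.out⁻¹)⁻¹ ∈ Q := by
      simpa using heq
    have hPmem := hinj _ h1.1 _ h2.1 hQmem
    have : ((b₁.out⁻¹⁻¹ : G) : G ⧸ P) = ((b₂.out⁻¹⁻¹ : G) : G ⧸ P) := by
      rw [QuotientGroup.eq]; simpa using hPmem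
    rw [h1.2, h2.2] at this
    exact this

lemma half {G E : Type*} [Group G] [Fintype G] [MulAction G E]
    (α β : Set E)
    (hedgeα : ∀ y : G, (α ∩ y • α).Nonempty → y • α = α)
    (P Q : Subgroup G)
    (hP : P = MulAction.stabilizer G α)
    (hQ : Q = MulAction.stabilizer G β)
    (x : G) (γ γ' : Set E)
    (hγ : γ = ⋃ g ∈ P, g • (α ∩ x • β))
    (hγ' : γ' = ⋃ g ∈ Q, g • (β ∩ x⁻¹ • α))
    (Z : Set E) :
    P.index * (Finset.univ.filter fun g : G =>
        sep (α \ γ) (g • Z) = 1 ∧ sep α (g • Z) = 0).card ≤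
    Q.index * (Finset.univ.filter fun g : G =>
        sep β (g • Z) = 1 ∧ sep (β \ γ') (g • Z) = 0).card := by
  -- basic invariance facts
  have hPα : ∀ h ∈ P, h • α = α := by
    intro h hh; rw [hP] at hh; exact hh
  have hQβ : ∀ h ∈ Q, h • β = β := by
    intro h hh; rw [hQ] at hh; exact hh
  have hγsub : ∀ h ∈ P, h • γ ⊆ γ := by
    rintro h hh e ⟨e', he', rfl⟩
    rw [hγ] at he' ⊢
    obtain ⟨g, hg, hge⟩ : ∃ g ∈ P, e' ∈ g • (α ∩ x • β) := by simpa using he'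
    have : h • e' ∈ (h * g) • (α ∩ x • β) := by
      rw [mul_smul]; exact Set.smul_mem_smul_set hge
    exact Set.mem_biUnion (P.mul_mem hh hg) this
  have hγinv : ∀ h ∈ P, h • γ = γ := by
    intro h hh
    refine subset_antisymm (hγsub h hh) ?_
    have := Set.smul_set_mono (a := h) (hγsub h⁻¹ (P.inv_mem hh))
    rwa [smul_inv_smul] at this
  have hγ'sub : ∀ h ∈ Q, h • γ' ⊆ γ' := by
    rintro h hh e ⟨e', he', rfl⟩
    rw [hγ'] at he' ⊢
    obtain ⟨g, hg, hge⟩ : ∃ g ∈ Q, e' ∈ g • (β ∩ x⁻¹ • α) := by simpa using he'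
    have : h • e' ∈ (h * g) • (β ∩ x⁻¹ • α) := by
      rw [mul_smul]; exact Set.smul_mem_smul_set hge
    exact Set.mem_biUnion (Q.mul_mem hh hg) this
  have hγ'inv : ∀ h ∈ Q, h • γ' = γ' := by
    intro h hh
    refine subset_antisymm (hγ'sub h hh) ?_
    have := Set.smul_set_mono (a := h) (hγ'sub h⁻¹ (Q.inv_mem hh))
    rwa [smul_inv_smul] at this
  have hAinv : ∀ h ∈ P, h • (α \ γ) = α \ γ := by
    intro h hh
    rw [Set.smul_set_sdiff, hPα h hh, hγinv h hh]
  have hBinv : ∀ h ∈ Q, h • (β \ γ') = β \ γ' := by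
    intro h hh
    rw [Set.smul_set_sdiff, hQβ h hh, hγ'inv h hh]
  have hS'γ' : β ∩ x⁻¹ • α ⊆ γ' := by
    rw [hγ']
    have := Set.subset_biUnion_of_mem (u := fun g : G => g • (β ∩ x⁻¹ • α)) Q.one_mem
    simpa using this
  -- unpacking bad elements
  have hbad : ∀ g : G, sep (α \ γ) (g • Z) = 1 → sep α (g • Z) = 0 →
      (g • Z ⊆ α) ∧ (g • Z ∩ (α \ γ)).Nonempty ∧ (g • Z ∩ γ).Nonempty := by
    intro g h1 h0
    obtain ⟨⟨v, hvZ, hvA⟩, ⟨w, hwZ, hwA⟩⟩ := (sep_eq_one_iff _ _).mp h1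
    have hsub : g • Z ⊆ α := by
      by_contra hcon
      exact (sep_eq_zero_iff _ _).mp h0
        ⟨⟨v, hvZ, hvA.1⟩, Set.inter_compl_nonempty_iff.mpr hcon⟩
    have hwγ : w ∈ γ := by
      by_contra hwγ
      exact hwA ⟨hsub hwZ, hwγ⟩
    exact ⟨hsub, ⟨v, hvZ, hvA⟩, ⟨w, hwZ, hwγ⟩⟩
  -- all bad elements lie in a single right P-coset
  have hcoset : ∀ g₁ g₂ : G,
      sep (α \ γ) (g₁ • Z) = 1 → sep α (g₁ • Z) = 0 →
      sep (α \ γ) (g₂ • Z) = 1 → sep α (g₂ • Z) = 0 → g₁ * g₂⁻¹ ∈ P := by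
    intro g₁ g₂ h11 h10 h21 h20
    obtain ⟨hsub₁, -, -⟩ := hbad g₁ h11 h10
    obtain ⟨hsub₂, ⟨v, hvZ, hvA⟩, -⟩ := hbad g₂ h21 h20
    obtain ⟨z, hz, rfl⟩ := hvZ
    rw [hP]
    refine hedgeα (g₁ * g₂⁻¹) ⟨(g₁ * g₂⁻¹) • (g₂ • z), ?_, ?_⟩
    · have : (g₁ * g₂⁻¹) • (g₂ • z) = g₁ • z := by
        rw [smul_smul]; group
      rw [this]
      exact hsub₁ (Set.smul_mem_smul_set hz)
    · exact Set.smul_mem_smul_set (hsub₂ (Set.smul_mem_smul_set hz))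
  -- compensating good element
  have hstep : ∀ g : G, sep (α \ γ) (g • Z) = 1 → sep α (g • Z) = 0 →
      ∃ a, a ∈ P ∧ sep β ((x⁻¹ * a⁻¹ * g) • Z) = 1 ∧
        sep (β \ γ') ((x⁻¹ * a⁻¹ * g) • Z) = 0 := by
    intro g h1 h0
    obtain ⟨hsub, ⟨v, hvZ, hvA⟩, ⟨w, hwZ, hwγ⟩⟩ := hbad g h1 h0
    rw [hγ] at hwγ
    obtain ⟨a, haP, hwa⟩ : ∃ a ∈ P, w ∈ a • (α ∩ x • β) := by simpa using hwγ
    have hainvα : a⁻¹ • α = α := by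
      conv_lhs => rw [← hPα a haP]
      rw [inv_smul_smul]
    have hWeq : ∀ u : E, u ∈ g • Z → (x⁻¹ * a⁻¹) • u ∈ (x⁻¹ * a⁻¹ * g) • Z := by
      intro u hu
      obtain ⟨z, hz, hzu⟩ := hu
      refine ⟨z, hz, ?_⟩
      rw [← hzu, smul_smul]
    have hWeq' : ∀ u : E, u ∈ (x⁻¹ * a⁻¹ * g) • Z → (a * x) • u ∈ g • Z := by
      intro u hu
      obtain ⟨z, hz, hzu⟩ := hu
      refine ⟨z, hz, ?_⟩
      rw [← hzu, smul_smul, show a * x * (x⁻¹ * a⁻¹ * g) = g by group]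
    refine ⟨a, haP, ?_, ?_⟩
    · rw [sep_eq_one_iff]
      constructor
      · refine ⟨(x⁻¹ * a⁻¹) • w, hWeq w hwZ, ?_⟩
        have h1 : a⁻¹ • w ∈ α ∩ x • β := Set.mem_smul_set_iff_inv_smul_mem.mp hwa
        have h2 : x⁻¹ • a⁻¹ • w ∈ β := Set.mem_smul_set_iff_inv_smul_mem.mp h1.2
        rwa [mul_smul]
      · refine ⟨(x⁻¹ * a⁻¹) • v, hWeq v hvZ, ?_⟩
        intro hvβ
        apply hvA.2
        have hv1 : a⁻¹ • v ∈ x • β := by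
          rw [Set.mem_smul_set_iff_inv_smul_mem, ← mul_smul]
          exact hvβ
        have hv2 : a⁻¹ • v ∈ α := by
          rw [← hainvα]
          exact Set.smul_mem_smul_set hvA.1
        rw [hγ]
        apply Set.mem_biUnion haP
        rw [Set.mem_smul_set_iff_inv_smul_mem]
        exact ⟨hv2, hv1⟩
    · rw [sep_eq_zero_iff]
      rintro ⟨⟨u, huW, huB⟩, -⟩
      apply huB.2
      apply hS'γ'
      refine ⟨huB.1, ?_⟩
      have h1 : (a * x) • u ∈ α := hsub (hWeq' u huW)
      have h2 : x • u ∈ α := by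
        rw [← hainvα, Set.mem_smul_set_iff_inv_smul_mem, inv_inv, smul_smul]
        exact h1
      rw [Set.mem_smul_set_iff_inv_smul_mem, inv_inv]
      exact h2
  -- assemble via key_count
  set s := Finset.univ.filter fun g : G =>
      sep (α \ γ) (g • Z) = 1 ∧ sep α (g • Z) = 0 with hsdef
  set t := Finset.univ.filter fun g : G =>
      sep β (g • Z) = 1 ∧ sep (β \ γ') (g • Z) = 0 with htdef
  have hmems : ∀ g : G, g ∈ s ↔ sep (α \ γ) (g • Z) = 1 ∧ sep α (g • Z) = 0 := by
    intro g; simp [hsdef]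
  have hmemt : ∀ g : G, g ∈ t ↔ sep β (g • Z) = 1 ∧ sep (β \ γ') (g • Z) = 0 := by
    intro g; simp [htdef]
  have hsinv : ∀ h ∈ P, ∀ g ∈ s, h * g ∈ s := by
    intro h hh g hg
    rw [hmems] at hg ⊢
    rw [mul_smul, sep_smul_invariant (hAinv h hh), sep_smul_invariant (hPα h hh)]
    exact hg
  have htinv : ∀ h ∈ Q, ∀ g ∈ t, h * g ∈ t := by
    intro h hh g hg
    rw [hmemt] at hg ⊢
    rw [mul_smul, sep_smul_invariant (hBinv h hh), sep_smul_invariant (hQβ h hh)]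
    exact hg
  classical
  refine key_count P Q s t hsinv htinv
    (fun g => if h : sep (α \ γ) (g • Z) = 1 ∧ sep α (g • Z) = 0 then
        x⁻¹ * (Classical.choose (hstep g h.1 h.2))⁻¹ * g else 1) ?_ ?_
  · intro g hg
    rw [hmems] at hg
    beta_reduce
    rw [dif_pos hg, hmemt]
    exact (Classical.choose_spec (hstep g hg.1 hg.2)).2
  · intro g₁ hg₁ g₂ hg₂ _
    rw [hmems] at hg₁ hg₂
    exact hcoset g₁ g₂ hg₁.1 hg₁.2 hg₂.1 hg₂.2

/-- Lemma 7.6 (analogue of Krstić–Vogtmann Lemma 7.2): in the Setup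
(Section 7.2) with `G` finite, `p = [G : P]`, `q = [G : Q]`, for every
`Z ⊆ E`: `p·|α∖γ|_Z + q·|β∖γ'|_Z ≤ p·|α|_Z + q·|β|_Z`, where
`|X|_Z = Σ_{g ∈ G} |X|*_{g • Z}`. -/
theorem stmt_11 {G E : Type*} [Group G] [Fintype G] [MulAction G E]
    (α β : Set E)
    (hedgeα : ∀ y : G, (α ∩ y • α).Nonempty → y • α = α)
    (hedgeβ : ∀ y : G, (β ∩ y • β).Nonempty → y • β = β)
    (P Q : Subgroup G)
    (hP : P = MulAction.stabilizer G α)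
    (hQ : Q = MulAction.stabilizer G β)
    (x : G)
    (γ γ' : Set E)
    (hγ : γ = ⋃ g ∈ P, g • (α ∩ x • β))
    (hγ' : γ' = ⋃ g ∈ Q, g • (β ∩ x⁻¹ • α))
    (p q : ℕ) (hp : p = P.index) (hq : q = Q.index) :
    ∀ Z : Set E,
      p * (∑ g : G, sep (α \ γ) (g • Z)) + q * (∑ g : G, sep (β \ γ') (g • Z)) ≤
        p * (∑ g : G, sep α (g • Z)) + q * (∑ g : G, sep β (g • Z)) := by
  intro Z
  subst hp hq
  have claimA := half α β hedgeα P Q hP hQ x γ γ' hγ hγ' Z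
  have claimB := half β α hedgeβ Q P hQ hP x⁻¹ γ' γ hγ' (by rw [inv_inv]; exact hγ) Z
  -- sum identities
  have idA : (∑ g : G, sep (α \ γ) (g • Z)) +
      (Finset.univ.filter fun g : G =>
        sep α (g • Z) = 1 ∧ sep (α \ γ) (g • Z) = 0).card =
      (∑ g : G, sep α (g • Z)) +
      (Finset.univ.filter fun g : G =>
        sep (α \ γ) (g • Z) = 1 ∧ sep α (g • Z) = 0).card := by
    rw [Finset.card_filter, Finset.card_filter, ← Finset.sum_add_distrib,
      ← Finset.sum_add_distrib]
    apply Finset.sum_congr rfl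
    intro g _
    rcases sep_zero_or_one (α \ γ) (g • Z) with h | h <;>
      rcases sep_zero_or_one α (g • Z) with h' | h' <;> simp [h, h']
  have idB : (∑ g : G, sep (β \ γ') (g • Z)) +
      (Finset.univ.filter fun g : G =>
        sep β (g • Z) = 1 ∧ sep (β \ γ') (g • Z) = 0).card =
      (∑ g : G, sep β (g • Z)) +
      (Finset.univ.filter fun g : G =>
        sep (β \ γ') (g • Z) = 1 ∧ sep β (g • Z) = 0).card := by
    rw [Finset.card_filter, Finset.card_filter, ← Finset.sum_add_distrib,
      ← Finset.sum_add_distrib]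
    apply Finset.sum_congr rfl
    intro g _
    rcases sep_zero_or_one (β \ γ') (g • Z) with h | h <;>
      rcases sep_zero_or_one β (g • Z) with h' | h' <;> simp [h, h']
  have mulA := congrArg (fun n => P.index * n) idA
  have mulB := congrArg (fun n => Q.index * n) idB
  simp only [mul_add] at mulA mulB
  linarith [mulA, mulB, claimA, claimB]
end

section
/- Assume the Setup (Section 7.2) with G a finite group, let p = [G : P] and q = [G : Q], and let (Z_j)_{j ∈ J} be a finite family of subsets of E. Define ‖X‖ = Σ_{j ∈ J} Σ_{g ∈ G} |X|*_{g • Z_j} for X ⊆ E. Then p·‖α ∖ γ‖ + q·‖β ∖ γ'‖ ≤ p·‖α‖ + q·‖β‖. -/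
open Pointwise

open scoped Classical

section
variable {G E : Type*} [Group G] [Fintype G] [MulAction G E]

noncomputable def SA (G : Type*) [Group G] [Fintype G] {E : Type*} [MulAction G E] (W X : Set E) : Finset G :=
  Finset.univ.filter (fun g : G => (W ∩ g • X).Nonempty ∧ (W ∩ (g • X)ᶜ).Nonempty)

lemma mem_SA {W X : Set E} {g : G} :
    g ∈ SA G W X ↔ (W ∩ g • X).Nonempty ∧ (W ∩ (g • X)ᶜ).Nonempty := by
  simp [SA]

lemma key (α β : Set E)
    (hedgeα : ∀ y : G, (α ∩ y • α).Nonempty → y • α = α)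
    (P Q : Subgroup G)
    (hP : P = MulAction.stabilizer G α)
    (hQ : Q = MulAction.stabilizer G β)
    (x : G) (γ γ' : Set E)
    (hγ : γ = ⋃ g ∈ P, g • (α ∩ x • β))
    (hγ' : γ' = ⋃ g ∈ Q, g • (β ∩ x⁻¹ • α))
    (W : Set E) :
    Nat.card Q * (SA G W (α \ γ) \ SA G W α).card
      ≤ Nat.card P * ((SA G W β).filter (fun m : G => W ∩ m • (β \ γ') = ∅)).card := by
  classical
  set A : Set E := α \ γ with hA
  set B : Set E := β \ γ' with hB
  -- basic invariance facts
  have hPmem : ∀ h : G, h ∈ P → h • α = α := by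
    intro h hh; rw [hP] at hh; exact hh
  have hQmem : ∀ k : G, k ∈ Q → k • β = β := by
    intro k hk; rw [hQ] at hk; exact hk
  have hγsub : γ ⊆ α := by
    rw [hγ]; intro a ha
    simp only [Set.mem_iUnion] at ha
    obtain ⟨g, hg, hag⟩ := ha
    have : a ∈ g • α := Set.smul_set_mono Set.inter_subset_left hag
    rwa [hPmem g hg] at this
  have hγP : ∀ h : G, h ∈ P → h • γ = γ := by
    have hsub : ∀ h : G, h ∈ P → h • γ ⊆ γ := by
      intro h hh a ha
      rw [Set.mem_smul_set_iff_inv_smul_mem, hγ] at ha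
      simp only [Set.mem_iUnion] at ha
      obtain ⟨g, hg, hag⟩ := ha
      rw [hγ]
      simp only [Set.mem_iUnion]
      refine ⟨h * g, P.mul_mem hh hg, ?_⟩
      rw [← smul_smul, Set.mem_smul_set_iff_inv_smul_mem]
      exact hag
    intro h hh
    refine subset_antisymm (hsub h hh) ?_
    intro a ha
    have : h⁻¹ • a ∈ γ := hsub h⁻¹ (P.inv_mem hh) ⟨a, ha, rfl⟩
    have := Set.smul_mem_smul_set (a := h) this
    rwa [smul_inv_smul] at this
  have hAP : ∀ h : G, h ∈ P → h • A = A := by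
    intro h hh; rw [hA, Set.smul_set_sdiff, hPmem h hh, hγP h hh]
  have hsub1 : α ∩ x • β ⊆ γ := by
    rw [hγ]; intro a ha
    simp only [Set.mem_iUnion]
    exact ⟨1, P.one_mem, by simpa using ha⟩
  have hf6 : ∀ h : G, h ∈ P → A ∩ (h * x) • β = ∅ := by
    intro h hh
    rw [Set.eq_empty_iff_forall_notMem]
    rintro a ⟨haA, haB⟩
    have haα : a ∈ α := haA.1
    have : a ∈ h • (α ∩ x • β) := by
      rw [Set.smul_set_inter, hPmem h hh]
      exact ⟨haα, by rwa [smul_smul]⟩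
    have : a ∈ γ := by
      rw [← hγP h hh]
      exact Set.smul_set_mono hsub1 this
    exact haA.2 this
  have hf7 : α ∩ x • B = ∅ := by
    rw [Set.eq_empty_iff_forall_notMem]
    rintro a ⟨haα, haB⟩
    rw [hB, Set.smul_set_sdiff] at haB
    apply haB.2
    have : x⁻¹ • a ∈ β ∩ x⁻¹ • α := by
      constructor
      · rw [← Set.mem_smul_set_iff_inv_smul_mem]; exact haB.1
      · exact Set.smul_mem_smul_set haα
    have : x⁻¹ • a ∈ γ' := by
      rw [hγ']
      simp only [Set.mem_iUnion]
      exact ⟨1, Q.one_mem, by simpa using this⟩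
    exact ⟨x⁻¹ • a, this, by simp⟩
  have hγ'Q : ∀ k : G, k ∈ Q → k • γ' = γ' := by
    have hsub : ∀ k : G, k ∈ Q → k • γ' ⊆ γ' := by
      intro h hh a ha
      rw [Set.mem_smul_set_iff_inv_smul_mem, hγ'] at ha
      simp only [Set.mem_iUnion] at ha
      obtain ⟨g, hg, hag⟩ := ha
      rw [hγ']
      simp only [Set.mem_iUnion]
      refine ⟨h * g, Q.mul_mem hh hg, ?_⟩
      rw [← smul_smul, Set.mem_smul_set_iff_inv_smul_mem]
      exact hag
    intro h hh
    refine subset_antisymm (hsub h hh) ?_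
    intro a ha
    have : h⁻¹ • a ∈ γ' := hsub h⁻¹ (Q.inv_mem hh) ⟨a, ha, rfl⟩
    have := Set.smul_mem_smul_set (a := h) this
    rwa [smul_inv_smul] at this
  have hBQ : ∀ k : G, k ∈ Q → k • B = B := by
    intro k hk; rw [hB, Set.smul_set_sdiff, hQmem k hk, hγ'Q k hk]
  -- the main actors
  set Bad : Finset G := SA G W A \ SA G W α with hBad
  set Gb : Finset G := (SA G W β).filter (fun m : G => W ∩ m • B = ∅) with hGb
  have hBadP : ∀ g ∈ Bad, (W ∩ g • A).Nonempty ∧ W ⊆ g • α ∧ (W ∩ g • γ).Nonempty := by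
    intro g hg
    rw [hBad, Finset.mem_sdiff, mem_SA, mem_SA] at hg
    obtain ⟨⟨h1, h2⟩, h3⟩ := hg
    have hWα : W ⊆ g • α := by
      by_contra hc
      apply h3
      constructor
      · obtain ⟨w, hw1, hw2⟩ := h1
        exact ⟨w, hw1, Set.smul_set_mono Set.diff_subset hw2⟩
      · rw [Set.not_subset] at hc
        obtain ⟨w, hw, hw2⟩ := hc
        exact ⟨w, hw, hw2⟩
    refine ⟨h1, hWα, ?_⟩
    obtain ⟨w, hw1, hw2⟩ := h2
    refine ⟨w, hw1, ?_⟩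
    have hαA : α \ A = γ := by
      rw [hA, Set.diff_diff_right_self, Set.inter_eq_self_of_subset_right hγsub]
    rw [← hαA, Set.smul_set_sdiff]
    exact ⟨hWα hw1, hw2⟩
  -- membership in Gb is stable under right multiplication by Q
  have hGbQ : ∀ m k : G, k ∈ Q → m ∈ Gb → m * k ∈ Gb := by
    intro m k hk hm
    rw [hGb, Finset.mem_filter, mem_SA] at hm ⊢
    have hsm : (m * k) • β = m • β := by rw [← smul_smul, hQmem k hk]
    have hsB : (m * k) • B = m • B := by rw [← smul_smul, hBQ k hk]
    rw [hsm, hsB]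
    exact hm
  set D : Finset G := Finset.univ.filter (fun k : G => k ∈ Q ∧ x * k * x⁻¹ ∈ P) with hD
  have hD1 : (1 : G) ∈ D := by
    rw [hD, Finset.mem_filter]
    refine ⟨Finset.mem_univ _, Q.one_mem, ?_⟩
    simpa using P.one_mem
  set R : Finset (G × G) := Finset.univ.filter
      (fun gm : G × G => gm.1 ∈ Bad ∧ gm.1⁻¹ * gm.2 * x⁻¹ ∈ P ∧ (W ∩ gm.2 • β).Nonempty)
      with hR
  have hR_mem : ∀ g m : G, ((g, m) ∈ R ↔ g ∈ Bad ∧ g⁻¹ * m * x⁻¹ ∈ P ∧ (W ∩ m • β).Nonempty) := by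
    intro g m; rw [hR, Finset.mem_filter]; simp
  -- elements related to a bad g land in Gb
  have hk1 : ∀ g m : G, (g, m) ∈ R → m ∈ Gb := by
    intro g m hgm
    rw [hR_mem] at hgm
    obtain ⟨hgBad, hp, hWmβ⟩ := hgm
    obtain ⟨hWA, hWα, hWγ⟩ := hBadP g hgBad
    set p : G := g⁻¹ * m * x⁻¹ with hpdef
    have hm : m = g * p * x := by rw [hpdef]; group
    rw [hGb, Finset.mem_filter, mem_SA]
    refine ⟨⟨hWmβ, ?_⟩, ?_⟩
    · -- W meets (m • β)ᶜ : any point of W ∩ g • A works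
      obtain ⟨w, hw1, hw2⟩ := hWA
      refine ⟨w, hw1, ?_⟩
      intro hwm
      have : w ∈ g • A ∩ g • ((p * x) • β) := by
        refine ⟨hw2, ?_⟩
        rw [smul_smul, ← mul_assoc, ← hm]
        exact hwm
      rw [← Set.smul_set_inter] at this
      rw [hf6 p hp] at this
      simpa using this
    · -- W ∩ m • B = ∅
      rw [Set.eq_empty_iff_forall_notMem]
      rintro a ⟨haW, haB⟩
      have haα : a ∈ g • α := hWα haW
      have haα' : a ∈ (g * p) • α := by
        rw [← smul_smul, hPmem p hp]
        exact haα
      have haB' : a ∈ (g * p) • (x • B) := by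
        have h9 : g * p * x = m := by rw [hpdef]; group
        rw [smul_smul, h9]
        exact haB
      have : a ∈ (g * p) • (α ∩ x • B) := by
        rw [Set.smul_set_inter]; exact ⟨haα', haB'⟩
      rw [hf7] at this
      simpa using this
  have hk2 : ∀ g m : G, (g, m) ∈ R → W ⊆ (m * x⁻¹) • α := by
    intro g m hgm
    rw [hR_mem] at hgm
    obtain ⟨hgBad, hp, hWmβ⟩ := hgm
    obtain ⟨hWA, hWα, hWγ⟩ := hBadP g hgBad
    have : (m * x⁻¹) • α = g • α := by
      have : m * x⁻¹ = g * (g⁻¹ * m * x⁻¹) := by group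
      rw [this, ← smul_smul, hPmem _ hp]
    rw [this]
    exact hWα
  -- Step (1): choice of a good translate for each bad g
  set p0 : G → G := fun g =>
    if hg : ∃ h : G, h ∈ P ∧ (W ∩ ((g * h) • (α ∩ x • β))).Nonempty then hg.choose else 1
    with hp0
  have hp0spec : ∀ g ∈ Bad, p0 g ∈ P ∧ (W ∩ ((g * p0 g) • (α ∩ x • β))).Nonempty := by
    intro g hg
    obtain ⟨hWA, hWα, hWγ⟩ := hBadP g hg
    have hex : ∃ h : G, h ∈ P ∧ (W ∩ ((g * h) • (α ∩ x • β))).Nonempty := by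
      obtain ⟨w, hw1, hw2⟩ := hWγ
      rw [Set.mem_smul_set_iff_inv_smul_mem, hγ] at hw2
      simp only [Set.mem_iUnion] at hw2
      obtain ⟨h, hh, hm⟩ := hw2
      refine ⟨h, hh, w, hw1, ?_⟩
      rw [← smul_smul, Set.mem_smul_set_iff_inv_smul_mem]
      exact hm
    rw [hp0]
    simp only [dif_pos hex]
    exact hex.choose_spec
  have c1 : Bad.card * D.card ≤ R.card := by
    rw [← Finset.card_product]
    apply Finset.card_le_card_of_injOn (fun gk : G × G => (gk.1, gk.1 * p0 gk.1 * x * gk.2))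
    · rintro ⟨g, k⟩ hgk
      rw [Finset.mem_coe] at hgk ⊢
      rw [Finset.mem_product] at hgk
      obtain ⟨hg, hk⟩ := hgk
      rw [hD, Finset.mem_filter] at hk
      obtain ⟨-, hkQ, hkP⟩ := hk
      obtain ⟨hP0, hne⟩ := hp0spec g hg
      rw [hR_mem]
      refine ⟨hg, ?_, ?_⟩
      · have h9 : g⁻¹ * (g * p0 g * x * k) * x⁻¹ = p0 g * (x * k * x⁻¹) := by group
        rw [h9]
        exact P.mul_mem hP0 hkP
      · have h9 : (g * p0 g * x * k) • β = (g * p0 g) • (x • β) := by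
          rw [mul_smul (g * p0 g * x) k, hQmem k hkQ, mul_smul]
        rw [h9]
        exact hne.mono (Set.inter_subset_inter_right _
          (Set.smul_set_mono Set.inter_subset_right))
    · rintro ⟨g, k⟩ h1 ⟨g', k'⟩ h2 heq
      simp only [Prod.mk.injEq] at heq
      obtain ⟨h3, h4⟩ := heq
      subst h3
      simp only [Prod.mk.injEq]
      exact ⟨trivial, mul_left_cancel h4⟩
  -- Step (2)
  set M : Finset G := R.image Prod.snd with hM
  set Pfin : Finset G := Finset.univ.filter (fun h : G => h ∈ P) with hPfin
  set Qfin : Finset G := Finset.univ.filter (fun k : G => k ∈ Q) with hQfin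
  have c2 : R.card ≤ M.card * Pfin.card := by
    rw [← Finset.card_product]
    apply Finset.card_le_card_of_injOn (fun gm : G × G => (gm.2, gm.1⁻¹ * gm.2 * x⁻¹))
    · rintro ⟨g, m⟩ hgm
      rw [Finset.mem_coe, Finset.mem_product]
      constructor
      · exact Finset.mem_image_of_mem Prod.snd hgm
      · rw [hPfin, Finset.mem_filter]
        exact ⟨Finset.mem_univ _, ((hR_mem g m).1 hgm).2.1⟩
    · rintro ⟨g, m⟩ h1 ⟨g', m'⟩ h2 heq
      simp only [Prod.mk.injEq] at heq
      obtain ⟨h3, h4⟩ := heq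
      subst h3
      simp only [Prod.mk.injEq]
      have h5 : g⁻¹ * m = g'⁻¹ * m := mul_right_cancel h4
      have h6 : g⁻¹ = g'⁻¹ := mul_right_cancel h5
      exact ⟨inv_injective h6, trivial⟩
  -- properties of elements of M
  have hMprop : ∀ m ∈ M, W ⊆ (m * x⁻¹) • α ∧ W.Nonempty := by
    intro m hm
    rw [hM, Finset.mem_image] at hm
    obtain ⟨⟨g, m'⟩, hgm, hsnd⟩ := hm
    simp only at hsnd
    subst hsnd
    refine ⟨hk2 g m' hgm, ?_⟩
    obtain ⟨-, -, hne⟩ := (hR_mem g m').1 hgm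
    exact hne.mono Set.inter_subset_left
  -- Step (3)
  have c3 : M.card * Qfin.card ≤ D.card * Gb.card := by
    rw [← Finset.card_product]
    apply Finset.card_le_mul_card_image_of_maps_to
      (f := fun mk : G × G => mk.1 * mk.2) (t := Gb)
    · rintro ⟨m, k⟩ hmk
      rw [Finset.mem_product] at hmk
      obtain ⟨hmM, hkQ⟩ := hmk
      rw [hQfin, Finset.mem_filter] at hkQ
      rw [hM, Finset.mem_image] at hmM
      obtain ⟨⟨g, m'⟩, hgm, hsnd⟩ := hmM
      simp only at hsnd
      subst hsnd
      exact hGbQ _ _ hkQ.2 (hk1 g m' hgm)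
    · intro b hb
      rcases Finset.eq_empty_or_nonempty
        ((M ×ˢ Qfin).filter (fun mk : G × G => mk.1 * mk.2 = b)) with hFe | hFne
      · rw [hFe]; simp
      · obtain ⟨⟨m₁, k₁⟩, hm₁⟩ := hFne
        apply Finset.card_le_card_of_injOn (fun mk : G × G => m₁⁻¹ * mk.1)
        · rintro ⟨m, k⟩ hmkF
          rw [Finset.mem_coe] at hmkF
          rw [Finset.mem_filter, Finset.mem_product] at hmkF hm₁
          obtain ⟨⟨hmM, hkQ⟩, hprod⟩ := hmkF
          obtain ⟨⟨hm₁M, hk₁Q⟩, hprod₁⟩ := hm₁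
          rw [hQfin, Finset.mem_filter] at hkQ hk₁Q
          have hkk : m₁⁻¹ * m = k₁ * k⁻¹ := by
            have : m₁ * k₁ = m * k := by rw [hprod, hprod₁]
            have h7 : m = m₁ * k₁ * k⁻¹ := by
              rw [this]; group
            rw [h7]; group
          have hQmem2 : m₁⁻¹ * m ∈ Q := by
            rw [hkk]; exact Q.mul_mem hk₁Q.2 (Q.inv_mem hkQ.2)
          rw [Finset.mem_coe, hD, Finset.mem_filter]
          refine ⟨Finset.mem_univ _, hQmem2, ?_⟩
          -- the hedge argument
          obtain ⟨hWm, hWne⟩ := hMprop m hmM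
          obtain ⟨hWm₁, -⟩ := hMprop m₁ hm₁M
          obtain ⟨w, hw⟩ := hWne
          set y : G := x * (m₁⁻¹ * m) * x⁻¹ with hy
          have hu : (x * m⁻¹) • w ∈ α := by
            have := hWm hw
            rw [Set.mem_smul_set_iff_inv_smul_mem] at this
            have h8 : (m * x⁻¹)⁻¹ = x * m⁻¹ := by group
            rwa [h8] at this
          have hv : (x * m₁⁻¹) • w ∈ α := by
            have := hWm₁ hw
            rw [Set.mem_smul_set_iff_inv_smul_mem] at this
            have h8 : (m₁ * x⁻¹)⁻¹ = x * m₁⁻¹ := by group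
            rwa [h8] at this
          have hvy : (x * m₁⁻¹) • w ∈ y • α := by
            rw [Set.mem_smul_set_iff_inv_smul_mem, smul_smul]
            have h8 : y⁻¹ * (x * m₁⁻¹) = x * m⁻¹ := by rw [hy]; group
            rw [h8]
            exact hu
          have hyα : y • α = α := hedgeα y ⟨(x * m₁⁻¹) • w, hv, hvy⟩
          rw [hP]
          exact hyα
        · rintro ⟨m, k⟩ h1 ⟨m', k'⟩ h2 heq
          simp only at heq
          have h3 : m = m' := mul_left_cancel heq
          subst h3
          rw [Finset.mem_coe, Finset.mem_filter] at h1 h2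
          simp only at h1 h2
          have h4 : m * k = m * k' := by rw [h1.2, h2.2]
          simp only [Prod.mk.injEq]
          exact ⟨trivial, mul_left_cancel h4⟩
  -- combine
  have hDpos : 0 < D.card := Finset.card_pos.mpr ⟨1, hD1⟩
  have hPcard : Nat.card P = Pfin.card := by
    rw [Nat.card_eq_fintype_card, hPfin, Fintype.card_subtype]
  have hQcard : Nat.card Q = Qfin.card := by
    rw [Nat.card_eq_fintype_card, hQfin, Fintype.card_subtype]
  have chain : Bad.card * D.card * Qfin.card ≤ D.card * Gb.card * Pfin.card := by
    calc Bad.card * D.card * Qfin.card ≤ R.card * Qfin.card :=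
          Nat.mul_le_mul c1 (le_refl _)
      _ ≤ M.card * Pfin.card * Qfin.card := Nat.mul_le_mul c2 (le_refl _)
      _ = M.card * Qfin.card * Pfin.card := by ring
      _ ≤ D.card * Gb.card * Pfin.card := Nat.mul_le_mul c3 (le_refl _)
  rw [show Bad.card * D.card * Qfin.card = D.card * (Qfin.card * Bad.card) by ring,
      show D.card * Gb.card * Pfin.card = D.card * (Pfin.card * Gb.card) by ring] at chain
  have hfin := Nat.le_of_mul_le_mul_left chain hDpos
  rw [hPcard, hQcard]
  exact hfin



lemma step1 (W δ ε : Set E) :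
    (SA G W ε).card + ((SA G W δ).filter (fun g : G => W ∩ g • ε = ∅)).card
      ≤ (SA G W δ).card + (SA G W ε \ SA G W δ).card := by
  have hdisj : Disjoint (SA G W ε) ((SA G W δ).filter (fun g : G => W ∩ g • ε = ∅)) := by
    rw [Finset.disjoint_left]
    intro g hg hg'
    rw [mem_SA] at hg
    rw [Finset.mem_filter] at hg'
    rw [hg'.2] at hg
    exact Set.not_nonempty_empty hg.1
  have hsubu : SA G W ε ∪ (SA G W δ).filter (fun g : G => W ∩ g • ε = ∅)
      ⊆ SA G W δ ∪ (SA G W ε \ SA G W δ) := by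
    intro g hg
    rcases Finset.mem_union.1 hg with h | h
    · by_cases hδ : g ∈ SA G W δ
      · exact Finset.mem_union_left _ hδ
      · exact Finset.mem_union_right _ (Finset.mem_sdiff.mpr ⟨h, hδ⟩)
    · exact Finset.mem_union_left _ (Finset.filter_subset _ _ h)
  calc (SA G W ε).card + ((SA G W δ).filter (fun g : G => W ∩ g • ε = ∅)).card
      = (SA G W ε ∪ (SA G W δ).filter (fun g : G => W ∩ g • ε = ∅)).card :=
        (Finset.card_union_of_disjoint hdisj).symm
    _ ≤ (SA G W δ ∪ (SA G W ε \ SA G W δ)).card := Finset.card_le_card hsubu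
    _ ≤ (SA G W δ).card + (SA G W ε \ SA G W δ).card := Finset.card_union_le _ _

lemma perW (α β : Set E)
    (hedgeα : ∀ y : G, (α ∩ y • α).Nonempty → y • α = α)
    (hedgeβ : ∀ y : G, (β ∩ y • β).Nonempty → y • β = β)
    (P Q : Subgroup G)
    (hP : P = MulAction.stabilizer G α)
    (hQ : Q = MulAction.stabilizer G β)
    (x : G) (γ γ' : Set E)
    (hγ : γ = ⋃ g ∈ P, g • (α ∩ x • β))
    (hγ' : γ' = ⋃ g ∈ Q, g • (β ∩ x⁻¹ • α))
    (W : Set E) :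
    Nat.card Q * (SA G W (α \ γ)).card + Nat.card P * (SA G W (β \ γ')).card
      ≤ Nat.card Q * (SA G W α).card + Nat.card P * (SA G W β).card := by
  have k1 := key α β hedgeα P Q hP hQ x γ γ' hγ hγ' W
  have k2 := key β α hedgeβ Q P hQ hP x⁻¹ γ' γ hγ' (by rw [inv_inv]; exact hγ) W
  have hγsub : γ ⊆ α := by
    rw [hγ]; intro a ha
    simp only [Set.mem_iUnion] at ha
    obtain ⟨g, hg, hag⟩ := ha
    have h1 : a ∈ g • α := Set.smul_set_mono Set.inter_subset_left hag
    have h2 : g • α = α := by rw [hP] at hg; exact hg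
    rwa [h2] at h1
  have hγ'sub : γ' ⊆ β := by
    rw [hγ']; intro a ha
    simp only [Set.mem_iUnion] at ha
    obtain ⟨g, hg, hag⟩ := ha
    have h1 : a ∈ g • β := Set.smul_set_mono Set.inter_subset_left hag
    have h2 : g • β = β := by rw [hQ] at hg; exact hg
    rwa [h2] at h1
  have s1 := step1 (G := G) W α (α \ γ)
  have s2 := step1 (G := G) W β (β \ γ')
  have m1 := Nat.mul_le_mul (le_refl (Nat.card Q)) s1
  have m2 := Nat.mul_le_mul (le_refl (Nat.card P)) s2
  rw [Nat.mul_add, Nat.mul_add] at m1 m2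
  linarith [m1, m2, k1, k2]

lemma sum_sep (X Zj : Set E) :
    ∑ g : G, sep X (g • Zj) = (SA G Zj X).card := by
  have h1 : ∀ g : G, sep X (g⁻¹ • Zj)
      = if (Zj ∩ g • X).Nonempty ∧ (Zj ∩ (g • X)ᶜ).Nonempty then 1 else 0 := by
    intro g
    have e1 : g • (g⁻¹ • Zj ∩ X) = Zj ∩ g • X := by
      rw [Set.smul_set_inter, smul_inv_smul]
    have e2 : g • (g⁻¹ • Zj ∩ Xᶜ) = Zj ∩ (g • X)ᶜ := by
      rw [Set.smul_set_inter, smul_inv_smul, Set.smul_set_compl]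
    have hiff : ((g⁻¹ • Zj ∩ X).Nonempty ∧ (g⁻¹ • Zj ∩ Xᶜ).Nonempty)
        ↔ ((Zj ∩ g • X).Nonempty ∧ (Zj ∩ (g • X)ᶜ).Nonempty) := by
      rw [← e1, ← e2, Set.smul_set_nonempty, Set.smul_set_nonempty]
    rw [sep, if_congr hiff rfl rfl]
  calc ∑ g : G, sep X (g • Zj) = ∑ g : G, sep X (g⁻¹ • Zj) :=
        Fintype.sum_equiv (Equiv.inv G) _ _ (fun g => by rw [Equiv.inv_apply, inv_inv])
    _ = ∑ g : G, if (Zj ∩ g • X).Nonempty ∧ (Zj ∩ (g • X)ᶜ).Nonempty then 1 else 0 :=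
        Finset.sum_congr rfl (fun g _ => h1 g)
    _ = (SA G Zj X).card := by rw [SA, Finset.card_filter]

end


/-- Lemma 7.10 (combinatorial content, analogue of Krstić–Vogtmann Lemma 7.2):
in the Setup (Section 7.2) with `G` finite, `p = [G : P]`, `q = [G : Q]`, and
`‖X‖ = Σ_j Σ_{g ∈ G} |X|*_{g • Z_j}` for a finite family `(Z_j)`, we have
`p‖α ∖ γ‖ + q‖β ∖ γ'‖ ≤ p‖α‖ + q‖β‖`. -/
theorem stmt_12 {G E : Type*} [Group G] [Fintype G] [MulAction G E]
    (α β : Set E)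
    (hedgeα : ∀ y : G, (α ∩ y • α).Nonempty → y • α = α)
    (hedgeβ : ∀ y : G, (β ∩ y • β).Nonempty → y • β = β)
    (P Q : Subgroup G)
    (hP : P = MulAction.stabilizer G α)
    (hQ : Q = MulAction.stabilizer G β)
    (x : G)
    (γ γ' : Set E)
    (hγ : γ = ⋃ g ∈ P, g • (α ∩ x • β))
    (hγ' : γ' = ⋃ g ∈ Q, g • (β ∩ x⁻¹ • α))
    (p q : ℕ) (hp : p = P.index) (hq : q = Q.index)
    {J : Type*} [Fintype J] (Z : J → Set E)
    (norm : Set E → ℕ)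
    (hnorm : ∀ X : Set E, norm X = ∑ j : J, ∑ g : G, sep X (g • Z j)) :
    p * norm (α \ γ) + q * norm (β \ γ') ≤ p * norm α + q * norm β := by
  have hnX : ∀ X : Set E, norm X = ∑ j : J, (SA G (Z j) X).card := by
    intro X
    rw [hnorm]
    exact Finset.sum_congr rfl (fun j _ => sum_sep X (Z j))
  set cP : ℕ := Nat.card P with hcP
  set cQ : ℕ := Nat.card Q with hcQ
  have hsum : cQ * norm (α \ γ) + cP * norm (β \ γ')
      ≤ cQ * norm α + cP * norm β := by
    rw [hnX, hnX, hnX, hnX, Finset.mul_sum, Finset.mul_sum, Finset.mul_sum, Finset.mul_sum,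
      ← Finset.sum_add_distrib, ← Finset.sum_add_distrib]
    exact Finset.sum_le_sum fun j _ =>
      perW α β hedgeα hedgeβ P Q hP hQ x γ γ' hγ hγ' (Z j)
  have hPidx : p * cP = Nat.card G := by rw [hp, hcP]; exact P.index_mul_card
  have hQidx : q * cQ = Nat.card G := by rw [hq, hcQ]; exact Q.index_mul_card
  have hpos : 0 < cP * cQ := Nat.mul_pos Nat.card_pos Nat.card_pos
  refine Nat.le_of_mul_le_mul_left ?_ hpos
  have e1 : (cP * cQ) * (p * norm (α \ γ) + q * norm (β \ γ'))
      = (p * cP) * (cQ * norm (α \ γ)) + (q * cQ) * (cP * norm (β \ γ')) := by ring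
  have e2 : (cP * cQ) * (p * norm α + q * norm β)
      = (p * cP) * (cQ * norm α) + (q * cQ) * (cP * norm β) := by ring
  rw [hPidx, hQidx] at e1 e2
  calc (cP * cQ) * (p * norm (α \ γ) + q * norm (β \ γ'))
      = Nat.card G * (cQ * norm (α \ γ)) + Nat.card G * (cP * norm (β \ γ')) := e1
    _ = Nat.card G * (cQ * norm (α \ γ) + cP * norm (β \ γ')) := by ring
    _ ≤ Nat.card G * (cQ * norm α + cP * norm β) := Nat.mul_le_mul (le_refl _) hsum
    _ = Nat.card G * (cQ * norm α) + Nat.card G * (cP * norm β) := by ring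
    _ = (cP * cQ) * (p * norm α + q * norm β) := e2.symm
end
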